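/- If n \ge 9 is an odd composite integer, then for every divisor d \ge 3 of n one has S_{n-1} \equiv S_{d-1} \pmod{d}. -/
import Mathlib

lemma derangement_shift (d : ℕ) (hd : 1 ≤ d) (hodd : Odd d) :
    ∀ j, (numDerangements (d + j) : ℤ) ≡ -(numDerangements j : ℤ) [ZMOD (d : ℤ)] := by
  have hd0 : (d : ℤ) ≡ 0 [ZMOD (d : ℤ)] := by
    unfold Int.ModEq; simp
  intro j
  induction j with
  | zero =>
    obtain ⟨e, rfl⟩ : ∃ e, d = e + 1 := ⟨d - 1, (Nat.succ_pred_eq_of_pos hd).symm⟩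
    rw [add_zero, numDerangements_succ]
    have he : Even e := by
      rcases Nat.even_or_odd e with h | h
      · exact h
      · exact absurd (h.add_one) (by simpa using hodd)
    have h1 : ((-1 : ℤ)) ^ e = 1 := he.neg_one_pow
    have h0 : ((e : ℤ) + 1) ≡ 0 [ZMOD ((e + 1 : ℕ) : ℤ)] := by
      have := hd0
      push_cast at this ⊢
      exact this
    calc ((e : ℤ) + 1) * (numDerangements e : ℤ) - (-1) ^ e
        ≡ 0 * (numDerangements e : ℤ) - (-1) ^ e [ZMOD ((e + 1 : ℕ) : ℤ)] :=
          (h0.mul_right _).sub_right _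
      _ = -(numDerangements 0 : ℤ) := by simp [h1]
  | succ j ih =>
    have hrw : d + (j + 1) = (d + j) + 1 := by ring
    rw [hrw, numDerangements_succ, numDerangements_succ]
    have hc : (((d + j : ℕ) : ℤ) + 1) ≡ ((j : ℤ) + 1) [ZMOD (d : ℤ)] := by
      have h := hd0.add (Int.ModEq.refl ((j : ℤ) + 1))
      have heq : ((d : ℤ)) + ((j : ℤ) + 1) = ((d + j : ℕ) : ℤ) + 1 := by push_cast; ring
      rw [heq, zero_add] at h
      exact h
    have hsign : ((-1 : ℤ)) ^ (d + j) = -((-1 : ℤ)) ^ j := by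
      rw [pow_add, hodd.neg_one_pow]; ring
    calc (((d + j : ℕ) : ℤ) + 1) * (numDerangements (d + j) : ℤ) - (-1) ^ (d + j)
        ≡ ((j : ℤ) + 1) * (-(numDerangements j : ℤ)) - (-1) ^ (d + j) [ZMOD (d : ℤ)] :=
          (hc.mul ih).sub_right _
      _ = -(((j : ℤ) + 1) * (numDerangements j : ℤ) - (-1) ^ j) := by rw [hsign]; ring

/-- If `n ≥ 9` is an odd composite integer, then for every divisor `d ≥ 3` of `n`,
`S_{n-1} ≡ S_{d-1} (mod d)`. -/
theorem derangement_mod_divisor_of_odd_composite (n d : ℕ) (hn : 9 ≤ n) (hodd : Odd n)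
    (hcomp : ¬ n.Prime) (hd : 3 ≤ d) (hdvd : d ∣ n) :
    (numDerangements (n - 1) : ℤ) ≡ (numDerangements (d - 1) : ℤ) [ZMOD (d : ℤ)] := by
  obtain ⟨q, rfl⟩ := hdvd
  have hd1 : 1 ≤ d := by omega
  have hq : Odd q := ((Nat.odd_mul).mp hodd).2
  have hdo : Odd d := ((Nat.odd_mul).mp hodd).1
  obtain ⟨k, rfl⟩ := hq
  clear hn hcomp hodd
  induction k with
  | zero => simp
  | succ k ih =>
    have hrw : d * (2 * (k + 1) + 1) - 1 = d + (d + (d * (2 * k + 1) - 1)) := by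
      have : 1 ≤ d * (2 * k + 1) := Nat.one_le_iff_ne_zero.mpr (by positivity)
      ring_nf
      omega
    rw [hrw]
    calc (numDerangements (d + (d + (d * (2 * k + 1) - 1))) : ℤ)
        ≡ -(numDerangements (d + (d * (2 * k + 1) - 1)) : ℤ) [ZMOD (d : ℤ)] :=
          derangement_shift d hd1 hdo _
      _ ≡ -(-(numDerangements (d * (2 * k + 1) - 1) : ℤ)) [ZMOD (d : ℤ)] :=
          (derangement_shift d hd1 hdo _).neg
      _ = (numDerangements (d * (2 * k + 1) - 1) : ℤ) := by ring
      _ ≡ (numDerangements (d - 1) : ℤ) [ZMOD (d : ℤ)] := ih
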